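/- Let G be a connected simple graph, let T_2 be a longest path in G with endpoints x and y and a fixed orientation from x to y, and let Q be a path in G from a vertex w ∈ V(T_2) to a vertex z with V(T_2) ∩ V(Q) = {w} and |V(Q)| ≥ 3, chosen with |V(Q)| as large as possible. Then {x, y, z} is an independent set, and moreover the sets N⁻(x), N⁺(y), N(z) are pairwise disjoint, where N⁻(x) is the set of predecessors on T_2 of neighbors of x, N⁺(y) is the set of successors on T_2 of neighbors of y, and N(z) is the neighborhood of z in G. -/

import Mathlib

open SimpleGraph

/-- The degree of a vertex: the cardinality of its neighborhood. -/
noncomputable def deg {V : Type*} (G : SimpleGraph V) (x : V) : ℕ :=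
  (G.neighborSet x).ncard

/-- The number of leaves (vertices of degree 1) of a subgraph. -/
noncomputable def leafCount {V : Type*} {G : SimpleGraph V} (H : G.Subgraph) : ℕ :=
  {v : H.verts | (H.coe.neighborSet v).ncard = 1}.ncard

/-- `H` is a tree with at most `k` leaves (a `k`-ended tree). -/
def IsEndedTree {V : Type*} {G : SimpleGraph V} (H : G.Subgraph) (k : ℕ) : Prop :=
  H.coe.IsTree ∧ leafCount H ≤ k

/-- `t_k`: the maximum order of a subgraph of `G` that is a tree with at most `k` leaves. -/
noncomputable def treeOrd {V : Type*} (G : SimpleGraph V) (k : ℕ) : ℕ :=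
  sSup {m | ∃ H : G.Subgraph, IsEndedTree H k ∧ H.verts.ncard = m}

/-- The number of vertices of a longest path in `G`. -/
noncomputable def pathOrd {V : Type*} (G : SimpleGraph V) : ℕ :=
  sSup {m | ∃ (u v : V) (p : G.Walk u v), p.IsPath ∧ p.support.length = m}

/-- `s` is an independent set of vertices of `G`. -/
def IsIndep {V : Type*} (G : SimpleGraph V) (s : Set V) : Prop :=
  s.Pairwise fun a b => ¬ G.Adj a b

/-- `σ₃`: the minimum degree sum over independent triples of vertices. -/
noncomputable def sigma3 {V : Type*} (G : SimpleGraph V) : ℕ :=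
  sInf {s | ∃ x y z : V, x ≠ y ∧ x ≠ z ∧ y ≠ z ∧
    ¬G.Adj x y ∧ ¬G.Adj x z ∧ ¬G.Adj y z ∧ s = deg G x + deg G y + deg G z}

/-- `N⁻(x)`: the set of predecessors along `p` of neighbors of `x`. -/
def predNbrs {V : Type*} {G : SimpleGraph V} {a b : V} (p : G.Walk a b) (x : V) : Set V :=
  {u | ∃ i, i < p.length ∧ G.Adj x (p.getVert (i + 1)) ∧ u = p.getVert i}

/-- `N⁺(y)`: the set of successors along `p` of neighbors of `y`. -/
def succNbrs {V : Type*} {G : SimpleGraph V} {a b : V} (p : G.Walk a b) (y : V) : Set V :=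
  {u | ∃ i, i < p.length ∧ G.Adj y (p.getVert i) ∧ u = p.getVert (i + 1)}


open List

section Aux

variable {V : Type*} {G : SimpleGraph V}

lemma walk_support_eq {a b : V} (p : G.Walk a b) :
    p.support = (List.range (p.length + 1)).map p.getVert := by
  induction p with
  | nil => simp [SimpleGraph.Walk.getVert]
  | @cons u v w h p ih =>
    rw [Walk.support_cons, Walk.length_cons, ih]
    conv_rhs => rw [List.range_succ_eq_map]
    simp [Function.comp, Walk.getVert_cons_succ]

lemma getVert_inj {a b : V} {p : G.Walk a b} (hp : p.IsPath) {i j : ℕ}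
    (hi : i ≤ p.length) (hj : j ≤ p.length) (h : p.getVert i = p.getVert j) : i = j := by
  have hs := hp.support_nodup
  rw [walk_support_eq] at hs
  exact List.inj_on_of_nodup_map hs (by simp; omega) (by simp; omega) h

lemma exists_seg {a b : V} (p : G.Walk a b) (i d : ℕ) (h : i + d ≤ p.length) :
    ∃ s : G.Walk (p.getVert i) (p.getVert (i + d)), s.length = d ∧
      s.support = (List.range' i (d+1)).map p.getVert := by
  induction d generalizing i with
  | zero => exact ⟨Walk.nil, rfl, by simp⟩
  | succ d ih =>
    obtain ⟨s', hl, hs⟩ := ih (i+1) (by omega)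
    have adj : G.Adj (p.getVert i) (p.getVert (i+1)) := p.adj_getVert_succ (by omega)
    refine ⟨(Walk.cons adj s').copy rfl (congrArg p.getVert (by omega)), ?_, ?_⟩
    · simp [hl]
    · rw [Walk.support_copy, Walk.support_cons, hs,
        show (List.range' i (d+1+1)) = i :: List.range' (i+1) (d+1) from List.range'_succ]
      simp

lemma mem_support_of_getVert {a b : V} {p : G.Walk a b} {t : ℕ} (ht : t ≤ p.length) :
    p.getVert t ∈ p.support := Walk.mem_support_iff_exists_getVert.mpr ⟨t, rfl, ht⟩

lemma nodup_map_getVert {a b : V} {p : G.Walk a b} (hp : p.IsPath) {I : List ℕ}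
    (hI : I.Nodup) (hb : ∀ t ∈ I, t ≤ p.length) : (I.map p.getVert).Nodup :=
  List.Nodup.map_on (fun s hs t ht h => getVert_inj hp (hb s hs) (hb t ht) h) hI

lemma support_props {a b : V} {p : G.Walk a b} (hp : p.IsPath) {c d : V} {m : G.Walk c d}
    (I : List ℕ) (hsup : m.support = I.map p.getVert) (hI : I.Nodup)
    (hb : ∀ t ∈ I, t ≤ p.length) :
    m.support.Nodup ∧ ∀ v ∈ m.support, v ∈ p.support := by
  constructor
  · rw [hsup]; exact nodup_map_getVert hp hI hb
  · intro v hv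
    rw [hsup] at hv
    obtain ⟨t, ht, rfl⟩ := List.mem_map.mp hv
    exact mem_support_of_getVert (hb t ht)

lemma glue_path {x y w z c : V} {p : G.Walk x y} {q : G.Walk w z} (hq : q.IsPath)
    (hint : ∀ v, v ∈ p.support → v ∈ q.support → v = w)
    (m : G.Walk w c) (hm : m.support.Nodup) (hmp : ∀ v ∈ m.support, v ∈ p.support) :
    (q.reverse.append m).IsPath := by
  rw [Walk.isPath_def, Walk.support_append, List.nodup_append]
  refine ⟨hq.reverse.support_nodup, List.Nodup.sublist (List.tail_sublist _) hm, ?_⟩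
  intro v hv1 v' hv2 hvv
  subst hvv
  have hvq : v ∈ q.support := by rwa [Walk.support_reverse, List.mem_reverse] at hv1
  have hvm : v ∈ m.support := List.mem_of_mem_tail hv2
  have hvw : v = w := hint v (hmp v hvm) hvq
  subst hvw
  have hc := m.support_eq_cons
  rw [hc] at hm
  exact (List.nodup_cons.mp hm).1 hv2

lemma glue_len {w z c : V} {q : G.Walk w z} (m : G.Walk w c) :
    (q.reverse.append m).support.length = q.length + m.length + 1 := by
  rw [Walk.length_support, Walk.length_append, Walk.length_reverse]

/-- mid1 : path  p(i) → p(i-1) → ... → x → p(i+1) → ... → y -/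
lemma mid1 {x y : V} {p : G.Walk x y} (hp : p.IsPath) {i : ℕ} (hiL : i < p.length)
    (hx : G.Adj x (p.getVert (i+1))) :
    ∃ m : G.Walk (p.getVert i) y, m.length = p.length ∧ m.support.Nodup ∧
      ∀ v ∈ m.support, v ∈ p.support := by
  obtain ⟨sA, hlA, hsA⟩ := exists_seg p 0 i (by omega)
  obtain ⟨sB, hlB, hsB⟩ := exists_seg p (i+1) (p.length - (i+1)) (by omega)
  have eA : p.getVert 0 = x := p.getVert_zero
  have eB : p.getVert (i+1+(p.length-(i+1))) = y := by
    rw [show i+1+(p.length-(i+1)) = p.length by omega, p.getVert_length]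
  have eA2 : p.getVert (0 + i) = p.getVert i := by rw [Nat.zero_add]
  set sA' := sA.copy eA eA2
  set sB' := sB.copy rfl eB
  refine ⟨sA'.reverse.append (Walk.cons hx sB'), ?_, ?_⟩
  · simp only [Walk.length_append, Walk.length_reverse, Walk.length_cons,
      Walk.length_copy, sA', sB', hlA, hlB]
    omega
  · have hsup : (sA'.reverse.append (Walk.cons hx sB')).support =
        ((List.range' 0 (i+1)).reverse ++ List.range' (i+1) (p.length - i)).map p.getVert := by
      rw [Walk.support_append, Walk.support_reverse, Walk.support_copy, hsA,
        Walk.support_cons, List.tail_cons, Walk.support_copy, hsB,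
        show p.length - (i+1) + 1 = p.length - i by omega,
        List.map_append, List.map_reverse]
    refine support_props hp _ hsup ?_ ?_
    · rw [List.nodup_append]
      refine ⟨List.nodup_reverse.mpr (List.nodup_range'), List.nodup_range', ?_⟩
      intro a ha1 b ha2 hab
      rw [List.mem_reverse, List.mem_range'_1] at ha1
      rw [List.mem_range'_1] at ha2
      omega
    · intro t ht
      rw [List.mem_append, List.mem_reverse, List.mem_range'_1, List.mem_range'_1] at ht
      omega

/-- mid2 : path  p(k) → ... → x → y → p(L-1) → ... → p(k+1), needs Adj x y -/
lemma mid2 {x y : V} {p : G.Walk x y} (hp : p.IsPath) {k : ℕ} (hkL : k < p.length)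
    (hxy : G.Adj x y) :
    ∃ m : G.Walk (p.getVert k) (p.getVert (k+1)), m.length = p.length ∧ m.support.Nodup ∧
      ∀ v ∈ m.support, v ∈ p.support := by
  obtain ⟨sA, hlA, hsA⟩ := exists_seg p 0 k (by omega)
  obtain ⟨sB, hlB, hsB⟩ := exists_seg p (k+1) (p.length - (k+1)) (by omega)
  have eA : p.getVert 0 = x := p.getVert_zero
  have eB : p.getVert (k+1+(p.length-(k+1))) = y := by
    rw [show k+1+(p.length-(k+1)) = p.length by omega, p.getVert_length]
  have eA2 : p.getVert (0 + k) = p.getVert k := by rw [Nat.zero_add]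
  set sA' := sA.copy eA eA2
  set sB' := sB.copy rfl eB
  refine ⟨sA'.reverse.append (Walk.cons hxy sB'.reverse), ?_, ?_⟩
  · simp only [Walk.length_append, Walk.length_reverse, Walk.length_cons,
      Walk.length_copy, sA', sB', hlA, hlB]
    omega
  · have hsup : (sA'.reverse.append (Walk.cons hxy sB'.reverse)).support =
        ((List.range' 0 (k+1)).reverse ++ (List.range' (k+1) (p.length - k)).reverse).map p.getVert := by
      rw [Walk.support_append, Walk.support_reverse, Walk.support_copy, hsA,
        Walk.support_cons, List.tail_cons, Walk.support_reverse, Walk.support_copy, hsB,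
        show p.length - (k+1) + 1 = p.length - k by omega,
        List.map_append, List.map_reverse, List.map_reverse]
    refine support_props hp _ hsup ?_ ?_
    · rw [List.nodup_append]
      refine ⟨List.nodup_reverse.mpr (List.nodup_range'),
        List.nodup_reverse.mpr (List.nodup_range'), ?_⟩
      intro a ha1 b ha2 hab
      rw [List.mem_reverse, List.mem_range'_1] at ha1
      rw [List.mem_reverse, List.mem_range'_1] at ha2
      omega
    · intro t ht
      rw [List.mem_append, List.mem_reverse, List.mem_reverse,
        List.mem_range'_1, List.mem_range'_1] at ht
      omega

/-- mid3 : (case k = i-1) path p(k) → y → p(L-1) → ... → p(k+2) → x → p(1) → ... → p(k-1) -/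
lemma mid3 {x y : V} {p : G.Walk x y} (hp : p.IsPath) {k : ℕ} (hk0 : 0 < k)
    (hkL : k + 2 ≤ p.length)
    (hx : G.Adj x (p.getVert (k+2))) (hy : G.Adj y (p.getVert k)) :
    ∃ m : G.Walk (p.getVert k) (p.getVert (k-1)), m.length = p.length - 1 ∧ m.support.Nodup ∧
      ∀ v ∈ m.support, v ∈ p.support := by
  obtain ⟨sB, hlB, hsB⟩ := exists_seg p (k+2) (p.length - (k+2)) (by omega)
  obtain ⟨sE, hlE, hsE⟩ := exists_seg p 0 (k-1) (by omega)
  have eB : p.getVert (k+2+(p.length-(k+2))) = y := by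
    rw [show k+2+(p.length-(k+2)) = p.length by omega, p.getVert_length]
  have eE : p.getVert 0 = x := p.getVert_zero
  have eE2 : p.getVert (0 + (k-1)) = p.getVert (k-1) := by rw [Nat.zero_add]
  set sB' := sB.copy rfl eB
  set sE' := sE.copy eE eE2
  refine ⟨Walk.cons hy.symm (sB'.reverse.append (Walk.cons hx.symm sE')), ?_, ?_⟩
  · simp only [Walk.length_cons, Walk.length_append, Walk.length_reverse,
      Walk.length_copy, sB', sE', hlB, hlE]
    omega
  · have hsup : (Walk.cons hy.symm (sB'.reverse.append (Walk.cons hx.symm sE'))).support =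
        (k :: ((List.range' (k+2) (p.length - k - 1)).reverse ++ List.range' 0 k)).map p.getVert := by
      rw [Walk.support_cons, Walk.support_append, Walk.support_reverse, Walk.support_copy, hsB,
        Walk.support_cons, List.tail_cons, Walk.support_copy, hsE,
        show p.length - (k+2) + 1 = p.length - k - 1 by omega,
        show k - 1 + 1 = k by omega]
      simp [List.map_append]
    refine support_props hp _ hsup ?_ ?_
    · rw [List.nodup_cons, List.nodup_append]
      refine ⟨?_, List.nodup_reverse.mpr (List.nodup_range'), List.nodup_range', ?_⟩
      · intro hmem
        rw [List.mem_append, List.mem_reverse, List.mem_range'_1, List.mem_range'_1] at hmem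
        omega
      · intro a ha1 b ha2 hab
        rw [List.mem_reverse, List.mem_range'_1] at ha1
        rw [List.mem_range'_1] at ha2
        omega
    · intro t ht
      simp only [List.mem_cons, List.mem_append, List.mem_reverse, List.mem_range'_1] at ht
      omega

/-- mid4 : (case k+2 ≤ i) path p(k) → ... → x → p(i+1) → ... → y → p(i-1) → ... → p(k+1) -/
lemma mid4 {x y : V} {p : G.Walk x y} (hp : p.IsPath) {k i : ℕ}
    (hki : k + 2 ≤ i) (hiL : i < p.length)
    (hx : G.Adj x (p.getVert (i+1))) (hy : G.Adj y (p.getVert (i-1))) :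
    ∃ m : G.Walk (p.getVert k) (p.getVert (k+1)), m.length = p.length - 1 ∧ m.support.Nodup ∧
      ∀ v ∈ m.support, v ∈ p.support := by
  obtain ⟨sA, hlA, hsA⟩ := exists_seg p 0 k (by omega)
  obtain ⟨sB, hlB, hsB⟩ := exists_seg p (i+1) (p.length - (i+1)) (by omega)
  obtain ⟨sC, hlC, hsC⟩ := exists_seg p (k+1) (i-1-(k+1)) (by omega)
  have eA : p.getVert 0 = x := p.getVert_zero
  have eA2 : p.getVert (0 + k) = p.getVert k := by rw [Nat.zero_add]
  have eB : p.getVert (i+1+(p.length-(i+1))) = y := by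
    rw [show i+1+(p.length-(i+1)) = p.length by omega, p.getVert_length]
  have eC : p.getVert (k+1+(i-1-(k+1))) = p.getVert (i-1) := by
    rw [show k+1+(i-1-(k+1)) = i-1 by omega]
  set sA' := sA.copy eA eA2
  set sB' := sB.copy rfl eB
  set sC' := sC.copy rfl eC
  refine ⟨sA'.reverse.append (Walk.cons hx (sB'.append (Walk.cons hy sC'.reverse))), ?_, ?_⟩
  · simp only [Walk.length_append, Walk.length_reverse, Walk.length_cons,
      Walk.length_copy, sA', sB', sC', hlA, hlB, hlC]
    omega
  · have hsup : (sA'.reverse.append (Walk.cons hx (sB'.append (Walk.cons hy sC'.reverse)))).support =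
        ((List.range' 0 (k+1)).reverse ++ (List.range' (i+1) (p.length - i) ++
          (List.range' (k+1) (i-k-1)).reverse)).map p.getVert := by
      rw [Walk.support_append, Walk.support_reverse, Walk.support_copy, hsA,
        Walk.support_cons, List.tail_cons, Walk.support_append, Walk.support_copy, hsB,
        Walk.support_cons, List.tail_cons, Walk.support_reverse, Walk.support_copy, hsC,
        show p.length - (i+1) + 1 = p.length - i by omega,
        show i-1-(k+1) + 1 = i-k-1 by omega,
        List.map_append, List.map_append, List.map_reverse, List.map_reverse]
    refine support_props hp _ hsup ?_ ?_
    · rw [List.nodup_append, List.nodup_append]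
      refine ⟨List.nodup_reverse.mpr (List.nodup_range'),
        ⟨List.nodup_range', List.nodup_reverse.mpr (List.nodup_range'), ?_⟩, ?_⟩
      · intro a ha1 b ha2 hab
        rw [List.mem_range'_1] at ha1
        rw [List.mem_reverse, List.mem_range'_1] at ha2
        omega
      · intro a ha1 b ha2 hab
        rw [List.mem_reverse, List.mem_range'_1] at ha1
        rw [List.mem_append, List.mem_reverse, List.mem_range'_1, List.mem_range'_1] at ha2
        omega
    · intro t ht
      simp only [List.mem_append, List.mem_reverse, List.mem_range'_1] at ht
      omega

lemma helper1 {x y : V} {p : G.Walk x y} (hp : p.IsPath)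
    (hlong : ∀ (u v : V) (r : G.Walk u v), r.IsPath → r.support.length ≤ p.support.length)
    {z : V} (hz : z ∉ p.support)
    {i : ℕ} (hiL : i < p.length) (hx : G.Adj x (p.getVert (i+1)))
    (hzv : G.Adj z (p.getVert i)) : False := by
  obtain ⟨m, hml, hmn, hmp⟩ := mid1 hp hiL hx
  have hpath : (Walk.cons hzv m).IsPath := by
    rw [Walk.isPath_def, Walk.support_cons, List.nodup_cons]
    exact ⟨fun h => hz (hmp z h), hmn⟩
  have := hlong _ _ _ hpath
  rw [Walk.length_support, Walk.length_support, Walk.length_cons, hml] at this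
  omega

lemma helper2 {x y : V} {p : G.Walk x y} (hp : p.IsPath)
    (hlong : ∀ (u v : V) (r : G.Walk u v), r.IsPath → r.support.length ≤ p.support.length)
    {w z : V} {q : G.Walk w z} (hq : q.IsPath)
    (hint : ∀ v, v ∈ p.support → v ∈ q.support → v = w)
    (hq2 : 2 ≤ q.length)
    {k i : ℕ} (hkw : p.getVert k = w) (hk0 : 0 < k) (hkL : k < p.length)
    (hi1 : 1 ≤ i) (hiL : i < p.length) (hki : k ≤ i)
    (hx : G.Adj x (p.getVert (i+1))) (hy : G.Adj y (p.getVert (i-1))) : False := by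
  rcases Nat.lt_or_ge (k+1) i with hcase | hcase
  · -- k + 2 ≤ i : mid4
    obtain ⟨m, hml, hmn, hmp⟩ := mid4 hp (k := k) (by omega) hiL hx hy
    have hpath := glue_path hq hint (m.copy hkw rfl)
      (by rwa [Walk.support_copy]) (by rw [Walk.support_copy]; exact hmp)
    have := hlong _ _ _ hpath
    rw [glue_len, Walk.length_copy, hml, Walk.length_support] at this
    omega
  · rcases Nat.lt_or_ge i (k+1) with hcase2 | hcase2
    · -- k = i : mid1
      have hik : i = k := by omega
      subst hik
      obtain ⟨m, hml, hmn, hmp⟩ := mid1 hp hiL hx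
      have hpath := glue_path hq hint (m.copy hkw rfl)
        (by rwa [Walk.support_copy]) (by rw [Walk.support_copy]; exact hmp)
      have := hlong _ _ _ hpath
      rw [glue_len, Walk.length_copy, hml, Walk.length_support] at this
      omega
    · -- i = k + 1 : mid3
      have hik : i = k + 1 := by omega
      subst hik
      obtain ⟨m, hml, hmn, hmp⟩ := mid3 hp hk0 (by omega)
        (by rwa [show k+2 = k+1+1 from rfl] at hx) (by rwa [show k+1-1 = k by omega] at hy)
      have hpath := glue_path hq hint (m.copy hkw rfl)
        (by rwa [Walk.support_copy]) (by rw [Walk.support_copy]; exact hmp)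
      have := hlong _ _ _ hpath
      rw [glue_len, Walk.length_copy, hml, Walk.length_support] at this
      omega

end Aux


/-- Let `p` be a longest path of `G` from `x` to `y`, and let `q` be a
path from `w ∈ V(p)` to `z` meeting `p` only in `w`, with at least 3 vertices and with as
many vertices as possible among all such paths. Then `{x, y, z}` is independent and the
sets `N⁻(x)`, `N⁺(y)`, `N(z)` are pairwise disjoint. -/
theorem indep_and_disjoint_of_longest_path {V : Type*} [Fintype V]
    (G : SimpleGraph V) (hconn : G.Connected)
    {x y : V} (p : G.Walk x y) (hp : p.IsPath)
    (hlong : ∀ (u v : V) (r : G.Walk u v), r.IsPath →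
      r.support.length ≤ p.support.length)
    {w z : V} (q : G.Walk w z) (hq : q.IsPath)
    (hw : w ∈ p.support)
    (hint : ∀ v, v ∈ p.support → v ∈ q.support → v = w)
    (hq3 : 3 ≤ q.support.length)
    (hqmax : ∀ (w' z' : V) (q' : G.Walk w' z'), q'.IsPath → w' ∈ p.support →
      (∀ v, v ∈ p.support → v ∈ q'.support → v = w') →
      q'.support.length ≤ q.support.length) :
    (x ≠ y ∧ x ≠ z ∧ y ≠ z ∧ ¬G.Adj x y ∧ ¬G.Adj x z ∧ ¬G.Adj y z) ∧
    Disjoint (predNbrs p x) (succNbrs p y) ∧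
    Disjoint (predNbrs p x) (G.neighborSet z) ∧
    Disjoint (succNbrs p y) (G.neighborSet z) := by
  classical
  have hLsupp := p.length_support
  have hqsupp := q.length_support
  have hq2 : 2 ≤ q.length := by omega
  have hL2 : 2 ≤ p.length := by have := hlong w z q hq; omega
  have hwz : w ≠ z := by
    intro h
    have h0 : q.getVert 0 = q.getVert q.length := by
      rw [q.getVert_zero, q.getVert_length, h]
    have := getVert_inj hq (by omega) le_rfl h0
    omega
  have hzp : z ∉ p.support := fun h => hwz (hint z h q.end_mem_support).symm
  have hwx : w ≠ x := by
    intro h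
    subst h
    have hpath := glue_path hq hint p hp.support_nodup (fun v hv => hv)
    have := hlong _ _ _ hpath
    rw [glue_len, Walk.length_support] at this
    omega
  have hwy : w ≠ y := by
    intro h
    subst h
    have hpath := glue_path hq hint p.reverse hp.reverse.support_nodup
      (fun v hv => by rwa [Walk.support_reverse, List.mem_reverse] at hv)
    have := hlong _ _ _ hpath
    rw [glue_len, Walk.length_reverse, Walk.length_support] at this
    omega
  obtain ⟨k, hkw, hkL'⟩ := Walk.mem_support_iff_exists_getVert.mp hw
  have hk0 : 0 < k := by
    rcases Nat.eq_zero_or_pos k with h | h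
    · subst h; rw [p.getVert_zero] at hkw; exact absurd hkw.symm hwx
    · exact h
  have hkL : k < p.length := by
    rcases Nat.lt_or_ge k p.length with h | h
    · exact h
    · exfalso
      have hkeq : k = p.length := by omega
      rw [hkeq, p.getVert_length] at hkw
      exact hwy hkw.symm
  have hlongR : ∀ (u v : V) (r : G.Walk u v), r.IsPath →
      r.support.length ≤ p.reverse.support.length := by
    intro u v r hr
    rw [Walk.support_reverse, List.length_reverse]
    exact hlong u v r hr
  have hzpR : z ∉ p.reverse.support := by rwa [Walk.support_reverse, List.mem_reverse]
  have hintR : ∀ v, v ∈ p.reverse.support → v ∈ q.support → v = w := fun v hv hvq =>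
    hint v (by rwa [Walk.support_reverse, List.mem_reverse] at hv) hvq
  have hnxy : ¬ G.Adj x y := by
    intro hxy
    obtain ⟨m, hml, hmn, hmp⟩ := mid2 hp hkL hxy
    have hpath := glue_path hq hint (m.copy hkw rfl)
      (by rwa [Walk.support_copy]) (by rw [Walk.support_copy]; exact hmp)
    have := hlong _ _ _ hpath
    rw [glue_len, Walk.length_copy, hml, Walk.length_support] at this
    omega
  have hnxz : ¬ G.Adj x z := by
    intro hxz
    have hx1 : G.Adj x (p.getVert (0+1)) := by
      have := p.adj_getVert_succ (show 0 < p.length by omega)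
      rwa [p.getVert_zero] at this
    exact helper1 hp hlong hzp (by omega) hx1
      (by rw [p.getVert_zero]; exact hxz.symm)
  have hnyz : ¬ G.Adj y z := by
    intro hyz
    have h1 : G.Adj y (p.reverse.getVert (0+1)) := by
      rw [p.getVert_reverse]
      have := p.adj_getVert_succ (show p.length - 1 < p.length by omega)
      rw [show p.length - 1 + 1 = p.length by omega, p.getVert_length] at this
      exact this.symm
    have h2 : G.Adj z (p.reverse.getVert 0) := by
      rw [p.reverse.getVert_zero]; exact hyz.symm
    exact helper1 hp.reverse hlongR hzpR (by rw [Walk.length_reverse]; omega) h1 h2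
  have hxy' : x ≠ y := by
    intro h
    have h0 : p.getVert 0 = p.getVert p.length := by
      rw [p.getVert_zero, p.getVert_length, h]
    have := getVert_inj hp (by omega) le_rfl h0
    omega
  have hxz' : x ≠ z := fun h => hzp (h ▸ p.start_mem_support)
  have hyz' : y ≠ z := fun h => hzp (h ▸ p.end_mem_support)
  refine ⟨⟨hxy', hxz', hyz', hnxy, hnxz, hnyz⟩, ?_, ?_, ?_⟩
  · rw [Set.disjoint_left]
    rintro v ⟨i, hiL, hxa, rfl⟩ ⟨j, hjL, hya, hvj⟩
    have hij : i = j + 1 := getVert_inj hp (by omega) (by omega) hvj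
    subst hij
    rcases le_or_gt k (j+1) with hc | hc
    · exact helper2 hp hlong hq hint hq2 hkw hk0 hkL (by omega) hiL hc hxa
        (by rwa [show j+1-1 = j by omega])
    · have h1 : p.reverse.getVert (p.length - k) = w := by
        rw [p.getVert_reverse, show p.length - (p.length - k) = k by omega]; exact hkw
      have h2 : G.Adj y (p.reverse.getVert ((p.length - (j+1)) + 1)) := by
        rw [p.getVert_reverse, show p.length - (p.length - (j+1) + 1) = j by omega]; exact hya
      have h3 : G.Adj x (p.reverse.getVert ((p.length - (j+1)) - 1)) := by
        rw [p.getVert_reverse, show p.length - (p.length - (j+1) - 1) = j+1+1 by omega]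
        exact hxa
      exact helper2 hp.reverse hlongR hq hintR hq2 h1 (by omega)
        (by rw [Walk.length_reverse]; omega) (by omega)
        (by rw [Walk.length_reverse]; omega) (by omega) h2 h3
  · rw [Set.disjoint_left]
    rintro v ⟨i, hiL, hxa, rfl⟩ hv2
    exact helper1 hp hlong hzp hiL hxa hv2
  · rw [Set.disjoint_left]
    rintro v ⟨j, hjL, hya, rfl⟩ hv2
    have h1 : G.Adj y (p.reverse.getVert ((p.length - (j+1)) + 1)) := by
      rw [p.getVert_reverse, show p.length - (p.length - (j+1) + 1) = j by omega]; exact hya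
    have h2 : G.Adj z (p.reverse.getVert (p.length - (j+1))) := by
      rw [p.getVert_reverse, show p.length - (p.length - (j+1)) = j+1 by omega]
      exact hv2
    exact helper1 hp.reverse hlongR hzpR (by rw [Walk.length_reverse]; omega) h1 h2
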